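/- Suppose block matrix G has a block structure where each of its h block rows contains one copy of a full-row-rank matrix G° shifted by one block column (a block-Toeplitz arrangement as in the open-loop covariate map). If G° admits a QR decomposition G° = Q R with Q invertible and R in row echelon form with positive diagonal entries, then G is full row rank. -/

import Mathlib

private lemma pivot_inj {h r : ℕ} (i i' : Fin h) (b b' : Fin r)
    (e : r * (i : ℕ) + (b : ℕ) = r * (i' : ℕ) + (b' : ℕ)) : i = i' ∧ b = b' := by
  have hb := b.2; have hb' := b'.2
  have hii : (i : ℕ) = (i' : ℕ) := by
    rcases Nat.lt_trichotomy (i : ℕ) (i' : ℕ) with hlt | heq | hgt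
    · have : r * ((i : ℕ) + 1) ≤ r * (i' : ℕ) := Nat.mul_le_mul_left _ hlt
      have : r * (i : ℕ) + r ≤ r * (i' : ℕ) := by nlinarith
      omega
    · exact heq
    · have : r * ((i' : ℕ) + 1) ≤ r * (i : ℕ) := Nat.mul_le_mul_left _ hgt
      have : r * (i' : ℕ) + r ≤ r * (i : ℕ) := by nlinarith
      omega
  have : r * (i : ℕ) = r * (i' : ℕ) := by rw [hii]
  exact ⟨Fin.ext hii, Fin.ext (by omega)⟩

/-- A block-Toeplitz matrix `G` whose `i`-th block row is `[0 ⋯ 0, G°, 0 ⋯ 0]`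
(with `G°` starting at block column `i`, blocks of height/width `r`) is full
row rank, provided `G° = Q R` with `Q` invertible and `R` in row echelon form
with positive diagonal entries. -/
theorem block_toeplitz_full_row_rank {h r s : ℕ} (hrs : r ≤ s)
    (G0 : Matrix (Fin r) (Fin s) ℝ)
    (Q : Matrix (Fin r) (Fin r) ℝ)
    -- `Rfac` is the row-echelon `r × s` factor `R` of the QR decomposition
    (Rfac : Matrix (Fin r) (Fin s) ℝ)
    (hQR : G0 = Q * Rfac)
    (hQ : IsUnit Q.det)
    (hech : ∀ (a : Fin r) (j : Fin s), (j : ℕ) < (a : ℕ) → Rfac a j = 0)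
    (hdiag : ∀ a : Fin r, 0 < Rfac a ⟨a, lt_of_lt_of_le a.2 hrs⟩)
    (G : Matrix (Fin h × Fin r) (Fin (s + r * (h - 1))) ℝ)
    (hGblock : ∀ (i : Fin h) (a : Fin r) (c : Fin (s + r * (h - 1))) (j : Fin s),
      (c : ℕ) = r * (i : ℕ) + (j : ℕ) → G (i, a) c = G0 a j)
    (hGzero : ∀ (i : Fin h) (a : Fin r) (c : Fin (s + r * (h - 1))),
      (∀ j : Fin s, (c : ℕ) ≠ r * (i : ℕ) + (j : ℕ)) → G (i, a) c = 0) :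
    G.rank = h * r := by
  classical
  -- The shifted echelon rows
  set R' : Fin h × Fin r → Fin (s + r * (h - 1)) → ℝ := fun p c =>
    if hc : r * (p.1 : ℕ) ≤ (c : ℕ) ∧ (c : ℕ) - r * (p.1 : ℕ) < s then
      Rfac p.2 ⟨(c : ℕ) - r * (p.1 : ℕ), hc.2⟩ else 0 with hR'
  -- each row of G is a `Q`-combination of the shifted echelon rows
  have hGR : ∀ (i : Fin h) (a : Fin r) (c : Fin (s + r * (h - 1))),
      G (i, a) c = ∑ b : Fin r, Q a b * R' (i, b) c := by
    intro i a c
    by_cases hc : r * (i : ℕ) ≤ (c : ℕ) ∧ (c : ℕ) - r * (i : ℕ) < s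
    · set j : Fin s := ⟨(c : ℕ) - r * (i : ℕ), hc.2⟩ with hj
      have hcj : (c : ℕ) = r * (i : ℕ) + (j : ℕ) := by simp [hj]; omega
      have h1 : G (i, a) c = G0 a j := hGblock i a c j hcj
      have h2 : ∀ b : Fin r, R' (i, b) c = Rfac b j := by
        intro b; simp only [hR']; rw [dif_pos hc]
      rw [h1, hQR]
      simp only [Matrix.mul_apply, h2]
    · have h1 : G (i, a) c = 0 := by
        apply hGzero
        intro j hj
        exact hc ⟨by omega, by have := j.2; omega⟩
      have h2 : ∀ b : Fin r, R' (i, b) c = 0 := by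
        intro b; simp only [hR']; rw [dif_neg hc]
      rw [h1]
      simp [h2]
  -- rows of G are linearly independent
  have hLI : LinearIndependent ℝ G := by
    refine Fintype.linearIndependent_iff.mpr ?_
    intro v hv
    -- the transported coefficients
    set w : Fin h × Fin r → ℝ := fun p => ∑ a : Fin r, v (p.1, a) * Q a p.2 with hw
    have hvc : ∀ c : Fin (s + r * (h - 1)), ∑ p : Fin h × Fin r, v p * G p c = 0 := by
      intro c
      have := congrFun hv c
      simpa [Finset.sum_apply] using this
    have hwc : ∀ c : Fin (s + r * (h - 1)), ∑ p : Fin h × Fin r, w p * R' p c = 0 := by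
      intro c
      rw [← hvc c]
      rw [Fintype.sum_prod_type, Fintype.sum_prod_type]
      refine Finset.sum_congr rfl fun i _ => ?_
      calc ∑ b : Fin r, w (i, b) * R' (i, b) c
          = ∑ b : Fin r, ∑ a : Fin r, v (i, a) * Q a b * R' (i, b) c := by
            refine Finset.sum_congr rfl fun b _ => ?_
            rw [hw]; rw [Finset.sum_mul]
        _ = ∑ a : Fin r, ∑ b : Fin r, v (i, a) * (Q a b * R' (i, b) c) := by
            rw [Finset.sum_comm]; simp [mul_assoc]
        _ = ∑ a : Fin r, v (i, a) * G (i, a) c := by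
            refine Finset.sum_congr rfl fun a _ => ?_
            rw [← Finset.mul_sum, hGR]
    -- w vanishes, by strong induction on the pivot position
    have hw0 : ∀ n : ℕ, ∀ (i : Fin h) (b : Fin r), r * (i : ℕ) + (b : ℕ) = n → w (i, b) = 0 := by
      intro n
      induction n using Nat.strong_induction_on with
      | _ n ih =>
        intro i b hn
        have hcval : r * (i : ℕ) + (b : ℕ) < s + r * (h - 1) := by
          have hi := i.2; have hb := b.2
          have : (i : ℕ) ≤ h - 1 := by omega
          have : r * (i : ℕ) ≤ r * (h - 1) := Nat.mul_le_mul_left _ this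
          omega
        set c : Fin (s + r * (h - 1)) := ⟨r * (i : ℕ) + (b : ℕ), hcval⟩ with hcdef
        have hcv : (c : ℕ) = r * (i : ℕ) + (b : ℕ) := rfl
        have hkey : ∑ p : Fin h × Fin r, w p * R' p c = w (i, b) * R' (i, b) c := by
          apply Finset.sum_eq_single
          · rintro ⟨i', b'⟩ _ hne
            rcases Nat.lt_trichotomy (r * (i' : ℕ) + (b' : ℕ)) n with hlt | heq | hgt
            · rw [ih _ hlt i' b' rfl, zero_mul]
            · exact absurd (Prod.ext_iff.mpr (pivot_inj i' i b' b (by omega))) hne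
            · have hz : R' (i', b') c = 0 := by
                simp only [hR']
                by_cases hc2 : r * (i' : ℕ) ≤ (c : ℕ) ∧ (c : ℕ) - r * (i' : ℕ) < s
                · rw [dif_pos hc2]
                  apply hech
                  show (c : ℕ) - r * (i' : ℕ) < (b' : ℕ)
                  omega
                · rw [dif_neg hc2]
              rw [hz, mul_zero]
          · intro habs
            exact absurd (Finset.mem_univ _) habs
        have hRc : R' (i, b) c = Rfac b ⟨b, lt_of_lt_of_le b.2 hrs⟩ := by
          simp only [hR']
          have hc2 : r * (i : ℕ) ≤ (c : ℕ) ∧ (c : ℕ) - r * (i : ℕ) < s := by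
            have := b.2; omega
          rw [dif_pos hc2]
          congr 1
          apply Fin.ext
          show (c : ℕ) - r * (i : ℕ) = (b : ℕ)
          omega
        have := hwc c
        rw [hkey, hRc] at this
        have hd := (hdiag b).ne'
        exact (mul_eq_zero.mp this).resolve_right hd
    have hwall : ∀ p : Fin h × Fin r, w p = 0 := fun ⟨i, b⟩ => hw0 _ i b rfl
    -- recover v = 0 from invertibility of Q
    intro p
    obtain ⟨i, a⟩ := p
    have hinj := (Matrix.vecMul_injective_iff_isUnit (A := Q)).mpr ((Matrix.isUnit_iff_isUnit_det Q).mpr hQ)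
    have hvm : Matrix.vecMul (fun a => v (i, a)) Q = 0 := by
      funext b
      have := hwall (i, b)
      simpa [Matrix.vecMul, dotProduct, hw] using this
    have : (fun a => v (i, a)) = 0 := by
      apply hinj
      show Matrix.vecMul (fun a => v (i, a)) Q = Matrix.vecMul 0 Q
      rw [hvm, Matrix.zero_vecMul]
    exact congrFun this a
  rw [hLI.rank_matrix]
  simp [Fintype.card_prod]
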